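/- Let α > 0, β < 0, set γ = β/(1+α²)^{5/2}, and let Z > 0. Suppose y ∈ C²([0,Z]) satisfies y''(x) = γ (1 + G⁻¹(y(x))²)^{5/4} for x ∈ (0,Z), with y(0) = G(α), y'(0) = 0, y(x) > 0 for x ∈ [0,Z), and y(Z) = 0, where y takes values in (−c₀/2, c₀/2). Then Z = (1+α²)^{5/4}/(√2 · √|β|) · ∫₀^α (α−t)^{-1/2} (1+t²)^{-5/4} dt. -/

import Mathlib

open Real MeasureTheory intervalIntegral Set Filter Topology

noncomputable def G (x : ℝ) : ℝ := ∫ t in (0:ℝ)..x, (1 + t ^ 2) ^ (-(5:ℝ)/4)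
noncomputable def c₀ : ℝ := ∫ t : ℝ, (1 + t ^ 2) ^ (-(5:ℝ)/4)
noncomputable def Ginv : ℝ → ℝ := Function.invFun G

lemma one_add_sq_pos (t : ℝ) : (0:ℝ) < 1 + t ^ 2 := by positivity

lemma gker_pos (t : ℝ) : 0 < (1 + t ^ 2) ^ (-(5:ℝ)/4) :=
  rpow_pos_of_pos (one_add_sq_pos t) _

lemma gker_cont : Continuous fun t : ℝ => (1 + t ^ 2) ^ (-(5:ℝ)/4) := by
  apply Continuous.rpow_const (by continuity)
  intro t; exact Or.inl (one_add_sq_pos t).ne'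

lemma gker_le_one (t : ℝ) : (1 + t ^ 2) ^ (-(5:ℝ)/4) ≤ 1 := by
  exact Real.rpow_le_one_of_one_le_of_nonpos (by nlinarith [sq_nonneg t]) (by norm_num)

lemma gker_integrable : Integrable (fun t : ℝ => (1 + t ^ 2) ^ (-(5:ℝ)/4)) := by
  have h1 : Integrable (fun t : ℝ => (1 + t ^ 2)⁻¹) := integrable_inv_one_add_sq
  refine h1.mono' gker_cont.aestronglyMeasurable (ae_of_all _ fun t => ?_)
  rw [Real.norm_eq_abs, abs_of_pos (gker_pos t)]
  rw [show (-(5:ℝ)/4) = -((5:ℝ)/4) by ring, Real.rpow_neg (one_add_sq_pos t).le, ← Real.rpow_neg_one (1 + t^2), ← Real.rpow_neg (one_add_sq_pos t).le]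
  apply Real.rpow_le_rpow_of_exponent_le (by nlinarith [sq_nonneg t]) (by norm_num)

lemma G_hasDerivAt (x : ℝ) : HasDerivAt G ((1 + x ^ 2) ^ (-(5:ℝ)/4)) x := by
  exact (gker_cont.integral_hasStrictDerivAt 0 x).hasDerivAt

lemma G_strictMono : StrictMono G :=
  strictMono_of_deriv_pos fun x => by rw [(G_hasDerivAt x).deriv]; exact gker_pos x

lemma G_zero : G 0 = 0 := by simp [G]

lemma G_neg (x : ℝ) : G (-x) = -G x := by
  have : G (-x) = ∫ t in (0:ℝ)..(-x), (1 + (-t) ^ 2) ^ (-(5:ℝ)/4) := by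
    simp [G]
  rw [this, intervalIntegral.integral_comp_neg (fun t => (1 + t ^ 2) ^ (-(5:ℝ)/4)),
    neg_zero, G, intervalIntegral.integral_symm, neg_neg]

lemma c₀_eq : c₀ = 2 * ∫ t in Ioi (0:ℝ), (1 + t ^ 2) ^ (-(5:ℝ)/4) := by
  calc c₀ = ∫ t : ℝ, (1 + |t| ^ 2) ^ (-(5:ℝ)/4) := by
        rw [c₀]; congr 1; funext t; rw [sq_abs]
    _ = 2 * ∫ t in Ioi (0:ℝ), (1 + t ^ 2) ^ (-(5:ℝ)/4) :=
        integral_comp_abs (f := fun s : ℝ => (1 + s ^ 2) ^ (-(5:ℝ)/4))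

lemma tendsto_G_atTop : Tendsto G atTop (𝓝 (c₀ / 2)) := by
  have h := intervalIntegral_tendsto_integral_Ioi 0 gker_integrable.integrableOn
    (tendsto_id (α := ℝ))
  rw [c₀_eq]; convert h using 2
  · rfl
  · ring

lemma tendsto_G_atBot : Tendsto G atBot (𝓝 (-(c₀ / 2))) := by
  have : G = fun x => -G (-x) := by funext x; rw [G_neg, neg_neg]
  rw [this]
  exact (tendsto_G_atTop.comp tendsto_neg_atBot_atTop).neg

lemma G_lt (x : ℝ) : G x < c₀ / 2 := by
  have h1 : G (x + 1) ≤ c₀ / 2 :=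
    ge_of_tendsto tendsto_G_atTop (eventually_atTop.2
      ⟨x + 1, fun b hb => G_strictMono.monotone hb⟩)
  exact lt_of_lt_of_le (G_strictMono (lt_add_one x)) h1

lemma G_surj {v : ℝ} (hv : v ∈ Ioo (-(c₀ / 2)) (c₀ / 2)) : ∃ x, G x = v := by
  obtain ⟨b, hb⟩ := (tendsto_G_atTop.eventually_const_lt hv.2).exists
  obtain ⟨a, ha⟩ := (tendsto_G_atBot.eventually_lt_const hv.1).exists
  have hab : a ≤ b := by
    by_contra h
    push_neg at h
    exact absurd (G_strictMono.lt_iff_lt.2 h) (by intro hh; linarith)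
  obtain ⟨x, _, hx⟩ := intermediate_value_Icc hab
    (fun t _ => (G_hasDerivAt t).continuousAt.continuousWithinAt) ⟨ha.le, hb.le⟩
  exact ⟨x, hx⟩

lemma Ginv_G (x : ℝ) : Ginv (G x) = x :=
  Function.leftInverse_invFun G_strictMono.injective x

lemma G_Ginv {v : ℝ} (hv : v ∈ Ioo (-(c₀ / 2)) (c₀ / 2)) : G (Ginv v) = v :=
  Function.invFun_eq (G_surj hv)

lemma Ginv_continuousAt {v : ℝ} (hv : v ∈ Ioo (-(c₀ / 2)) (c₀ / 2)) :
    ContinuousAt Ginv v := by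
  rw [ContinuousAt, tendsto_order]
  have hIoo : Ioo (-(c₀ / 2)) (c₀ / 2) ∈ 𝓝 v := isOpen_Ioo.mem_nhds hv
  constructor
  · intro b hb
    -- b < Ginv v
    have h1 : G b < v := by
      have := G_strictMono hb
      rwa [G_Ginv hv] at this
    filter_upwards [hIoo, Ioi_mem_nhds h1] with w hw hw2
    have : G b < G (Ginv w) := by rwa [G_Ginv hw]
    exact G_strictMono.lt_iff_lt.1 this
  · intro b hb
    have h1 : v < G b := by
      have := G_strictMono hb
      rwa [G_Ginv hv] at this
    filter_upwards [hIoo, Iio_mem_nhds h1] with w hw hw2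
    have : G (Ginv w) < G b := by rwa [G_Ginv hw]
    exact G_strictMono.lt_iff_lt.1 this

lemma Ginv_hasDerivAt {v : ℝ} (hv : v ∈ Ioo (-(c₀ / 2)) (c₀ / 2)) :
    HasDerivAt Ginv ((1 + Ginv v ^ 2) ^ ((5:ℝ)/4)) v := by
  have h1 : HasDerivAt G ((1 + Ginv v ^ 2) ^ (-(5:ℝ)/4)) (Ginv v) := G_hasDerivAt _
  have h2 : ((1 + Ginv v ^ 2) ^ (-(5:ℝ)/4)) ≠ 0 := (gker_pos _).ne'
  have h3 : ∀ᶠ w in 𝓝 v, G (Ginv w) = w := by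
    filter_upwards [isOpen_Ioo.mem_nhds hv] with w hw using G_Ginv hw
  have := HasDerivAt.of_local_left_inverse (Ginv_continuousAt hv) h1 h2 h3
  convert this using 1
  · rfl
  rw [show (-(5:ℝ)/4) = -((5:ℝ)/4) by ring, Real.rpow_neg (one_add_sq_pos _).le, inv_inv]

lemma const_helper {f : ℝ → ℝ} {a b : ℝ} (hab : a < b)
    (hc : ContinuousOn f (Icc a b)) (hd : ∀ x ∈ Ioo a b, HasDerivAt f 0 x) :
    f b = f a := by
  have key : ∀ x ∈ Ioo a b, f b = f x := by
    intro x hx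
    have := constant_of_has_deriv_right_zero (f := f) (a := x) (b := b)
      (hc.mono (Icc_subset_Icc hx.1.le le_rfl))
      (fun z hz => (hd z ⟨lt_of_lt_of_le hx.1 hz.1, hz.2⟩).hasDerivWithinAt)
    exact this b ⟨hx.2.le, le_rfl⟩
  have hne : (𝓝[Ioo a b] a).NeBot := left_nhdsWithin_Ioo_neBot hab
  have h1 : Tendsto f (𝓝[Ioo a b] a) (𝓝 (f a)) :=
    (hc.continuousWithinAt ⟨le_rfl, hab.le⟩).mono_left
      (nhdsWithin_mono a Ioo_subset_Icc_self)
  have h2 : Tendsto f (𝓝[Ioo a b] a) (𝓝 (f b)) := by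
    refine Tendsto.congr' ?_ tendsto_const_nhds
    filter_upwards [self_mem_nhdsWithin] with x hx using key x hx
  exact tendsto_nhds_unique h2 h1

lemma rho_intervalIntegrable (α : ℝ) :
    IntervalIntegrable (fun t => (α - t) ^ (-(1:ℝ)/2) * (1 + t ^ 2) ^ (-(5:ℝ)/4))
      volume 0 α := by
  have hg : IntervalIntegrable (fun t : ℝ => (α - t) ^ (-(1:ℝ)/2)) volume 0 α := by
    have h0 : IntervalIntegrable (fun x : ℝ => x ^ (-(1:ℝ)/2)) volume α (α - α) :=
      intervalIntegral.intervalIntegrable_rpow' (by norm_num)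
    simpa using h0.comp_sub_left α
  refine hg.mono_fun ?_ ?_
  · apply Measurable.aestronglyMeasurable
    apply measurable_of_continuousOn_compl_singleton α
    intro t ht
    apply ContinuousWithinAt.mono _ (subset_univ _)
    rw [continuousWithinAt_univ]
    have h1 : ContinuousAt (fun t : ℝ => (α - t) ^ (-(1:ℝ)/2)) t :=
      (continuousAt_const.sub continuousAt_id).rpow_const
        (Or.inl (sub_ne_zero.2 fun h => ht (by simp only [Set.mem_singleton_iff]; simpa using h.symm)))
    exact h1.mul gker_cont.continuousAt
  · refine ae_of_all _ fun t => ?_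
    simp only [Real.norm_eq_abs]
    rw [abs_mul]
    nth_rewrite 2 [← mul_one |(α - t) ^ (-(1:ℝ)/2)|]
    apply mul_le_mul_of_nonneg_left _ (abs_nonneg _)
    rw [abs_of_pos (gker_pos t)]
    exact gker_le_one t

theorem stmt_8 (α β γ Z : ℝ) (hα : 0 < α) (hβ : β < 0)
    (hγ : γ = β / (1 + α ^ 2) ^ ((5:ℝ)/2)) (hZ : 0 < Z)
    (y : ℝ → ℝ) (hy : ContDiff ℝ 2 y)
    (hrange : ∀ x ∈ Set.Icc 0 Z, y x ∈ Set.Ioo (-(c₀ / 2)) (c₀ / 2))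
    (hode : ∀ x ∈ Set.Ioo 0 Z, iteratedDeriv 2 y x = γ * (1 + Ginv (y x) ^ 2) ^ ((5:ℝ)/4))
    (hy0 : y 0 = G α) (hy'0 : deriv y 0 = 0)
    (hpos : ∀ x ∈ Set.Ico 0 Z, 0 < y x) (hyZ : y Z = 0) :
    Z = (1 + α ^ 2) ^ ((5:ℝ)/4) / (Real.sqrt 2 * Real.sqrt |β|) *
        ∫ t in (0:ℝ)..α, (α - t) ^ (-(1:ℝ)/2) * (1 + t ^ 2) ^ (-(5:ℝ)/4) := by
  have hγneg : γ < 0 := by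
    rw [hγ]
    apply div_neg_of_neg_of_pos hβ
    exact rpow_pos_of_pos (one_add_sq_pos α) _
  set u : ℝ → ℝ := fun x => Ginv (y x) with hu
  have hyd : Differentiable ℝ y := hy.differentiable (by norm_num)
  have hy'c : Continuous (deriv y) := hy.continuous_deriv (by norm_num)
  have hy'd : Differentiable ℝ (deriv y) := by
    have h2 : ContDiff ℝ ((1:ℕ) + 1) y := by exact_mod_cast hy
    exact ((contDiff_succ_iff_deriv.1 h2).2.2).differentiable (by norm_num)
  have hy2 : ∀ x, HasDerivAt (deriv y) (iteratedDeriv 2 y x) x := by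
    intro x
    have : iteratedDeriv 2 y = deriv (deriv y) := by
      rw [show (2:ℕ) = 1 + 1 from rfl, iteratedDeriv_succ, iteratedDeriv_one]
    rw [this]
    exact (hy'd x).hasDerivAt
  have hGu : ∀ x ∈ Set.Icc (0:ℝ) Z, G (u x) = y x := fun x hx => G_Ginv (hrange x hx)
  have hu0 : u 0 = α := by rw [hu]; simp only [hy0]; exact Ginv_G α
  have huZ : u Z = 0 := by
    have hyZ' : y Z = G 0 := by rw [hyZ, G_zero]
    rw [hu]; simp only [hyZ']; exact Ginv_G 0
  have hucont : ContinuousOn u (Set.Icc 0 Z) := fun x hx =>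
    (Ginv_continuousAt (hrange x hx)).comp_continuousWithinAt
      hy.continuous.continuousWithinAt
  have huderiv : ∀ x ∈ Set.Icc (0:ℝ) Z,
      HasDerivAt u ((1 + u x ^ 2) ^ ((5:ℝ)/4) * deriv y x) x := fun x hx =>
    (Ginv_hasDerivAt (hrange x hx)).comp x (hyd x).hasDerivAt
  -- energy identity
  have energy : ∀ x ∈ Set.Icc (0:ℝ) Z, deriv y x ^ 2 = 2 * (-γ) * (α - u x) := by
    have hEd : ∀ x ∈ Set.Ioo (0:ℝ) Z,
        HasDerivAt (fun x => deriv y x ^ 2 / 2 - γ * u x) 0 x := by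
      intro x hx
      have h1 : HasDerivAt (fun x => deriv y x ^ 2 / 2)
          (deriv y x * iteratedDeriv 2 y x) x := by
        have := ((hy2 x).pow 2).div_const 2
        convert this using 1
        · rfl
        · rfl
        · rfl
        ring
      have h2 : HasDerivAt (fun x => γ * u x)
          (γ * ((1 + u x ^ 2) ^ ((5:ℝ)/4) * deriv y x)) x :=
        (huderiv x ⟨hx.1.le, hx.2.le⟩).const_mul γ
      have := h1.sub h2
      convert this using 1
      · rfl
      · rfl
      · rfl
      rw [hode x hx]
      ring
    have hEc : ContinuousOn (fun x => deriv y x ^ 2 / 2 - γ * u x) (Set.Icc 0 Z) :=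
      (((hy'c.pow 2).div_const 2).continuousOn).sub (hucont.const_smul γ)
    intro x hx
    rcases eq_or_lt_of_le hx.1 with h | h
    · rw [← h, hy'0, hu0]; ring
    · have := const_helper h (hEc.mono (Set.Icc_subset_Icc le_rfl hx.2))
        (fun z hz => hEd z ⟨hz.1, lt_of_lt_of_le hz.2 hx.2⟩)
      rw [hy'0, hu0] at this
      nlinarith [this]
  have hule : ∀ x ∈ Set.Icc (0:ℝ) Z, u x ≤ α := by
    intro x hx
    have := energy x hx
    nlinarith [sq_nonneg (deriv y x)]
  have hy'neg : ∀ x ∈ Set.Ioc (0:ℝ) Z, deriv y x < 0 := by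
    intro x hx
    have hanti : StrictAntiOn (deriv y) (Set.Icc 0 Z) := by
      apply strictAntiOn_of_deriv_neg (convex_Icc 0 Z) hy'c.continuousOn
      intro z hz
      rw [interior_Icc] at hz
      rw [(hy2 z).deriv, hode z hz]
      exact mul_neg_of_neg_of_pos hγneg (rpow_pos_of_pos (one_add_sq_pos _) _)
    have := hanti ⟨le_rfl, hZ.le⟩ ⟨hx.1.le, hx.2⟩ hx.1
    rwa [hy'0] at this
  have hult : ∀ x ∈ Set.Ioc (0:ℝ) Z, u x < α := by
    intro x hx
    have h1 := energy x ⟨hx.1.le, hx.2⟩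
    have h2 := hy'neg x hx
    nlinarith
  have hunneg : ∀ x ∈ Set.Icc (0:ℝ) Z, 0 ≤ u x := by
    intro x hx
    rcases eq_or_lt_of_le hx.2 with h | h
    · rw [h, huZ]
    · have h1 : G 0 < G (u x) := by
        rw [G_zero, hGu x hx]
        exact hpos x ⟨hx.1, h⟩
      exact (G_strictMono.lt_iff_lt.1 h1).le
  have hy'eq : ∀ x ∈ Set.Ioc (0:ℝ) Z, deriv y x = -Real.sqrt (2 * (-γ) * (α - u x)) := by
    intro x hx
    have h1 := energy x ⟨hx.1.le, hx.2⟩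
    have h2 := hy'neg x hx
    rw [← h1, Real.sqrt_sq_eq_abs, abs_of_neg h2, neg_neg]
  -- the primitive
  set ρ : ℝ → ℝ := fun t => (α - t) ^ (-(1:ℝ)/2) * (1 + t ^ 2) ^ (-(5:ℝ)/4) with hρ
  set Φ : ℝ → ℝ := fun s => ∫ t in (0:ℝ)..s, ρ t with hΦ
  have hρc : ∀ s ∈ Set.Iio α, ContinuousAt ρ s := by
    intro s hs
    exact ((continuousAt_const.sub continuousAt_id).rpow_const
      (Or.inl (by simpa using sub_ne_zero.2 (ne_of_gt hs)))).mul gker_cont.continuousAt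
  have hΦc : ContinuousOn Φ (Set.Icc 0 α) := by
    have := continuousOn_primitive_interval' (rho_intervalIntegrable α) Set.left_mem_uIcc
    rwa [Set.uIcc_of_le hα.le] at this
  have hΦd : ∀ s ∈ Set.Ico (0:ℝ) α, HasDerivAt Φ (ρ s) s := by
    intro s hs
    apply intervalIntegral.integral_hasDerivAt_right
    · exact (rho_intervalIntegrable α).mono_set
        (by rw [Set.uIcc_of_le hs.1, Set.uIcc_of_le hα.le]; exact Set.Icc_subset_Icc le_rfl hs.2.le)
    · exact ContinuousAt.stronglyMeasurableAtFilter isOpen_Iio hρc s hs.2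
    · exact hρc s hs.2
  -- the key function H
  have hsqpos : (0:ℝ) < 2 * (-γ) := by linarith
  set c : ℝ := Real.sqrt (2 * (-γ)) with hc
  have hkey : Φ α = c * Z := by
    set H : ℝ → ℝ := fun x => (Φ α - Φ (u x)) - c * x with hH
    have hHc : ContinuousOn H (Set.Icc 0 Z) := by
      apply ContinuousOn.sub
      apply ContinuousOn.sub continuousOn_const
      · exact hΦc.comp hucont (fun x hx => ⟨hunneg x hx, hule x hx⟩)
      · exact (continuous_const.mul continuous_id).continuousOn
    have hHd : ∀ x ∈ Set.Ioo (0:ℝ) Z, HasDerivAt H 0 x := by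
      intro x hx
      have hxIcc : x ∈ Set.Icc (0:ℝ) Z := ⟨hx.1.le, hx.2.le⟩
      have hxIoc : x ∈ Set.Ioc (0:ℝ) Z := ⟨hx.1, hx.2.le⟩
      have hud := huderiv x hxIcc
      have hΦu : HasDerivAt (fun x => Φ (u x))
          (ρ (u x) * ((1 + u x ^ 2) ^ ((5:ℝ)/4) * deriv y x)) x :=
        (hΦd (u x) ⟨hunneg x hxIcc, hult x hxIoc⟩).comp x hud
      have := ((hasDerivAt_const x (Φ α)).sub hΦu).sub
        ((hasDerivAt_id x).const_mul c)
      convert this using 1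
      · rfl
      · rfl
      · rfl
      have hau : 0 < α - u x := sub_pos.2 (hult x hxIoc)
      rw [hy'eq x hxIoc, hρ]
      have e1 : ((1 + u x ^ 2) ^ (-(5:ℝ)/4)) * ((1 + u x ^ 2) ^ ((5:ℝ)/4)) = 1 := by
        rw [← Real.rpow_add (one_add_sq_pos _)]
        norm_num
      have e2 : Real.sqrt (2 * (-γ) * (α - u x)) = c * Real.sqrt (α - u x) := by
        rw [hc, ← Real.sqrt_mul hsqpos.le]
      have e3 : (α - u x) ^ (-(1:ℝ)/2) * Real.sqrt (α - u x) = 1 := by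
        rw [Real.sqrt_eq_rpow, ← Real.rpow_add hau]
        norm_num
      have e4 : ρ (u x) * ((1 + u x ^ 2) ^ ((5:ℝ)/4) * (c * Real.sqrt (α - u x))) = c := by
        rw [show ρ (u x) * ((1 + u x ^ 2) ^ ((5:ℝ)/4) * (c * Real.sqrt (α - u x)))
            = c * ((α - u x) ^ (-(1:ℝ)/2) * Real.sqrt (α - u x)) *
              ((1 + u x ^ 2) ^ (-(5:ℝ)/4) * (1 + u x ^ 2) ^ ((5:ℝ)/4)) by rw [hρ]; ring,
          e1, e3]
        ring
      rw [e2]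
      linear_combination -e4
    have hH0 : H Z = H 0 := const_helper hZ hHc hHd
    have hΦ0 : Φ 0 = 0 := by rw [hΦ]; simp
    rw [hH] at hH0
    simp only [hu0, huZ, hΦ0, mul_zero, sub_zero, sub_self] at hH0
    linarith [hH0]
  -- final algebra
  have hcpos : 0 < c := Real.sqrt_pos.2 hsqpos
  have hP : (0:ℝ) < (1 + α ^ 2) ^ ((5:ℝ)/2) := rpow_pos_of_pos (one_add_sq_pos α) _
  have hmul : c * (1 + α ^ 2) ^ ((5:ℝ)/4) = Real.sqrt 2 * Real.sqrt (-β) := by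
    have h4 : ((1:ℝ) + α ^ 2) ^ ((5:ℝ)/4) = Real.sqrt ((1 + α ^ 2) ^ ((5:ℝ)/2)) := by
      rw [Real.sqrt_eq_rpow, ← Real.rpow_mul (one_add_sq_pos α).le]
      norm_num
    rw [hc, h4, ← Real.sqrt_mul hsqpos.le, ← Real.sqrt_mul (by norm_num : (0:ℝ) ≤ 2)]
    congr 1
    rw [hγ]
    field_simp
  have hβ' : Real.sqrt |β| = Real.sqrt (-β) := by rw [abs_of_neg hβ]
  have hΦα : Φ α = ∫ t in (0:ℝ)..α, (α - t) ^ (-(1:ℝ)/2) * (1 + t ^ 2) ^ (-(5:ℝ)/4) := rfl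
  rw [← hΦα, hkey, hβ', ← hmul]
  have hPne : ((1:ℝ) + α ^ 2) ^ ((5:ℝ)/4) ≠ 0 := (rpow_pos_of_pos (one_add_sq_pos α) _).ne'
  field_simp
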